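/- Let G be a group in the class 𝒞 (with respect to generating set X and subset W) and let w, g be elements of G such that w ∈ W, C(w) is abelian and g ∈ C(w). If C(g) is non-abelian then g ∈ O(w), there exists w₀ ∈ W ∩ O(w) with C(g) = C(w₀), and C(g) = Z(g) × O(g) is a canonical subgroup with Z(g) ≤ O(w). -/

import Mathlib

namespace PaperBase

/-- A subgroup is abelian: all its elements commute. -/
def IsAbelianSub {G : Type*} [Group G] (H : Subgroup G) : Prop :=
  ∀ a ∈ H, ∀ b ∈ H, a * b = b * a

/-- `L` is the internal direct product of its subgroups `H` and `K`. -/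
def IsIDP {G : Type*} [Group G] (H K L : Subgroup G) : Prop :=
  (∀ h ∈ H, ∀ k ∈ K, Commute h k) ∧ H ⊓ K = ⊥ ∧ H ⊔ K = L

/-- `L` is the internal direct product of the family of subgroups `H i`. -/
def IsIDPFamily {G : Type*} [Group G] {ι : Type*} (H : ι → Subgroup G)
    (L : Subgroup G) : Prop :=
  (∀ i j, i ≠ j → ∀ x ∈ H i, ∀ y ∈ H j, Commute x y) ∧
  (∀ i, H i ⊓ (⨆ (j) (_ : j ≠ i), H j) = ⊥) ∧
  (⨆ i, H i) = L

/-- The conjugate `h H h⁻¹` of a subgroup. -/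
def conjSub {G : Type*} [Group G] (h : G) (H : Subgroup G) : Subgroup G :=
  H.map (MulAut.conj h).toMonoidHom

/-- Two subgroups are conjugate. -/
def AreConjSub {G : Type*} [Group G] (H K : Subgroup G) : Prop :=
  ∃ h : G, K = conjSub h H

/-- The big powers (BP) property: for every generic tuple `u` of non-trivial elements
there is a bound `n` such that `u 0 ^ α 0 * ⋯ * u k ^ α k = 1` with all `α i > 0`
forces some `α i < n`. -/
def HasBigPowers (G : Type*) [Group G] : Prop :=
  ∀ (k : ℕ) (u : Fin (k + 1) → G), (∀ i, u i ≠ 1) →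
    (∀ i : Fin k, ¬ Commute (u i.castSucc) (u i.succ)) →
    ∃ n : ℕ, ∀ α : Fin (k + 1) → ℕ, (∀ i, 0 < α i) →
      (List.ofFn fun i => u i ^ α i).prod = 1 → ∃ i, α i < n

/-- Unique roots. -/
def HasUniqueRoots (G : Type*) [Group G] : Prop :=
  ∀ (g h : G) (n : ℕ), n ≠ 0 → g ^ n = h ^ n → g = h

/-- A root element: not a proper power. -/
def IsRootElement {G : Type*} [Group G] (g : G) : Prop :=
  ¬ ∃ (h : G) (n : ℕ), 2 ≤ n ∧ g = h ^ n

/-- A canonical subgroup with respect to the generating set `X`. -/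
def IsCanonical {G : Type*} [Group G] (X : Set G) (H : Subgroup G) : Prop :=
  ∃ Y ⊆ X, H = Subgroup.closure Y

/-- `Y` is a minimal (by inclusion) subset of `X` satisfying `p`. -/
def MinimalWith {G : Type*} [Group G] (X : Set G) (p : Set G → Prop)
    (Y : Set G) : Prop :=
  Y ⊆ X ∧ p Y ∧ ∀ Y' ⊆ Y, p Y' → Y' = Y

/-- The centre of a subgroup `H`, viewed as a subgroup of the ambient group. -/
def subCenter {G : Type*} [Group G] (H : Subgroup G) : Subgroup G :=
  H ⊓ Subgroup.centralizer (H : Set G)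

/-- The generators `K` of a prospective subgroup `O(w)` commute with, and avoid, every
minimal subset `Y ⊆ X` satisfying `cond`. -/
def OProp {G : Type*} [Group G] (X : Set G) (cond : Set G → Prop) (K : Set G) : Prop :=
  ∀ Y : Set G, MinimalWith X cond Y → ∀ o ∈ K, (∀ y ∈ Y, Commute o y) ∧ o ∉ Y

/-- `H` is the maximal canonical subgroup whose generators commute with, and avoid,
every minimal subset `Y ⊆ X` satisfying `cond`. -/
def MaxCanonicalWith {G : Type*} [Group G] (X : Set G) (cond : Set G → Prop)
    (H : Subgroup G) : Prop :=
  ∃ K ⊆ X, H = Subgroup.closure K ∧ OProp X cond K ∧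
    ∀ K' ⊆ X, OProp X cond K' → Subgroup.closure K' ≤ H

/-- Conditions (C1)--(C8) for membership in the class 𝒞, with respect to the generating
set `X`, the set of representatives `W` and the centraliser decompositions `Z`, `O`. -/
structure ClassCWith (G : Type*) [Group G] (X W : Set G)
    (Z O : G → Subgroup G) : Prop where
  gen : Subgroup.closure X = ⊤
  /-- (C1) -/
  torsionFree : ∀ g : G, g ≠ 1 → ¬ IsOfFinOrder g
  /-- (C2) -/
  bigPowers : HasBigPowers G
  /-- (C3) -/
  uniqueRoots : HasUniqueRoots G
  /-- (C4)(a) -/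
  c4a : ∀ Y Y' : Set G, Y ⊆ X → Y' ⊆ X → Disjoint Y Y' →
    (∀ y ∈ Y, ∀ y' ∈ Y', Commute y y') →
    IsIDP (Subgroup.closure Y) (Subgroup.closure Y') (Subgroup.closure (Y ∪ Y'))
  /-- (C4)(b) -/
  c4b : ∀ x ∈ X, ∀ Y ⊆ X, x ∈ Subgroup.closure Y → x ∈ Y
  /-- (C6)(a) -/
  c6a : ∀ g : G, ∃ (k : ℕ) (ws : Fin (k + 1) → G) (h : G),
    (∀ i, ws i ∈ W) ∧
    (∀ i, Subgroup.centralizer {g} = conjSub h (Subgroup.centralizer {ws i})) ∧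
    (IsAbelianSub (Subgroup.centralizer {g}) → k = 0)
  /-- (C6)(b): `C(w) = Z(w) × O(w)` -/
  c6b : ∀ w ∈ W, IsIDP (Z w) (O w) (Subgroup.centralizer {w})
  /-- (C6)(b)(i) -/
  c6bi : ∀ w ∈ W, IsAbelianSub (Subgroup.centralizer {w}) →
    IsCanonical X (Subgroup.centralizer {w}) →
    Z w = ⊥ ∧ O w = Subgroup.centralizer {w}
  /-- (C6)(b)(ii) -/
  c6bii : ∀ w ∈ W, IsAbelianSub (Subgroup.centralizer {w}) →
    ¬ IsCanonical X (Subgroup.centralizer {w}) →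
    (∃ z : G, Z w = Subgroup.zpowers z) ∧ ¬ IsCanonical X (Z w) ∧
    MaxCanonicalWith X (fun Y => Z w ≤ Subgroup.closure Y) (O w)
  /-- (C6)(b)(iii) -/
  c6biii : ∀ w ∈ W, ¬ IsAbelianSub (Subgroup.centralizer {w}) →
    MaxCanonicalWith X (fun Y => w ∈ Subgroup.closure Y) (O w)
  /-- (C6)(c) -/
  c6c : ∀ w ∈ W, ∀ g ∈ O w,
    ¬ AreConjSub (Subgroup.centralizer {w}) (Subgroup.centralizer ({g} : Set G)) →
    ∃ w₀ h : G, w₀ ∈ W ∧ w₀ ∈ O w ∧ h ∈ O w ∧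
      Subgroup.centralizer ({g} : Set G) = conjSub h (Subgroup.centralizer {w₀})
  /-- (C7) -/
  c7 : ∀ w ∈ W, IsAbelianSub (Subgroup.centralizer {w}) →
    ∀ a h : G, a ∈ Subgroup.centralizer ({w} : Set G) →
      h⁻¹ * a * h ∈ Subgroup.centralizer ({w} : Set G) →
      h ∉ Subgroup.centralizer ({w} : Set G) →
      a ∈ O w ∧ Commute h a
  /-- (C8) -/
  c8 : ∀ w ∈ W, ¬ IsAbelianSub (Subgroup.centralizer {w}) →
    IsCanonical X (Subgroup.centralizer {w}) ∧
    (∃ Yw : Set G, MinimalWith X (fun Y => w ∈ Subgroup.closure Y) Yw ∧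
      Z w = Subgroup.closure Yw) ∧
    IsCanonical X (subCenter (Subgroup.centralizer {w}))

/-- `G` belongs to the class `𝒞(X, W)`. -/
def MemClassC (G : Type*) [Group G] (X W : Set G) : Prop :=
  ∃ Z O : G → Subgroup G, ClassCWith G X W Z O

/-- `G` belongs to the class `𝒞`. -/
def InClassC (G : Type*) [Group G] : Prop :=
  ∃ X W : Set G, MemClassC G X W

/-- `H` is discriminated by (fully residually) `G`. -/
def DiscriminatedBy (H G : Type*) [Group H] [Group G] : Prop :=
  ∀ S : Finset H, (∀ x ∈ S, x ≠ 1) → ∃ f : H →* G, ∀ x ∈ S, f x ≠ 1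

/-- A finitely generated free abelian subgroup. -/
def IsFGFreeAbelianSub {G : Type*} [Group G] (H : Subgroup G) : Prop :=
  ∃ n : ℕ, Nonempty (H ≃* Multiplicative (Fin n → ℤ))



lemma mem_conjSub {G : Type*} [Group G] {h a : G} {H : Subgroup G} :
    a ∈ conjSub h H ↔ h⁻¹ * a * h ∈ H := by
  constructor
  · rintro ⟨b, hb, rfl⟩
    simpa [MulAut.conj_apply, mul_assoc] using hb
  · intro hb
    exact ⟨h⁻¹ * a * h, hb, by simp [MulAut.conj_apply, mul_assoc]⟩

lemma conjSub_self_mem {G : Type*} [Group G] {h : G} {H : Subgroup G}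
    (hh : h ∈ H) : conjSub h H = H := by
  ext a
  rw [mem_conjSub]
  constructor
  · intro ha
    have : h * (h⁻¹ * a * h) * h⁻¹ ∈ H := H.mul_mem (H.mul_mem hh ha) (H.inv_mem hh)
    simpa [mul_assoc] using this
  · intro ha
    exact H.mul_mem (H.mul_mem (H.inv_mem hh) ha) hh

lemma isAbelianSub_conjSub {G : Type*} [Group G] {h : G} {H : Subgroup G}
    (hH : IsAbelianSub H) : IsAbelianSub (conjSub h H) := by
  intro a ha b hb
  rw [mem_conjSub] at ha hb
  have key := hH _ ha _ hb
  have : h * ((h⁻¹ * a * h) * (h⁻¹ * b * h)) * h⁻¹ =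
      h * ((h⁻¹ * b * h) * (h⁻¹ * a * h)) * h⁻¹ := by rw [key]
  simpa [mul_assoc] using this

lemma exists_finset_closure {G : Type*} [Group G] {S : Set G} {g : G}
    (h : g ∈ Subgroup.closure S) :
    ∃ F : Finset G, ↑F ⊆ S ∧ g ∈ Subgroup.closure (F : Set G) := by
  classical
  induction h using Subgroup.closure_induction with
  | mem x hx => exact ⟨{x}, by simpa using hx, Subgroup.subset_closure (by simp)⟩
  | one => exact ⟨∅, by simp, one_mem _⟩
  | mul x y hx hy ihx ihy =>
      obtain ⟨F1, hF1, hx1⟩ := ihx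
      obtain ⟨F2, hF2, hy2⟩ := ihy
      refine ⟨F1 ∪ F2, by simp [Set.union_subset hF1 hF2], ?_⟩
      exact mul_mem
        (Subgroup.closure_mono (by simp) hx1)
        (Subgroup.closure_mono (by simp) hy2)
  | inv x hx ih =>
      obtain ⟨F, h1, h2⟩ := ih
      exact ⟨F, h1, inv_mem h2⟩

lemma exists_minimalWith {G : Type*} [Group G] {X S : Set G} (hSX : S ⊆ X) {g : G}
    (hg : g ∈ Subgroup.closure S) :
    ∃ Y : Set G, Y ⊆ S ∧ MinimalWith X (fun Y => g ∈ Subgroup.closure Y) Y := by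
  classical
  obtain ⟨F0, hF0S, hgF0⟩ := exists_finset_closure hg
  have hex : ∃ n : ℕ, ∃ F : Finset G, F.card = n ∧ ↑F ⊆ S ∧
      g ∈ Subgroup.closure (F : Set G) := ⟨F0.card, F0, rfl, hF0S, hgF0⟩
  obtain ⟨F, hcard, hFS, hgF⟩ := Nat.find_spec hex
  refine ⟨↑F, hFS, hFS.trans hSX, hgF, ?_⟩
  intro Y' hY' hgY'
  set F' : Finset G := F.filter (fun x => x ∈ Y') with hF'def
  have hF'coe : (F' : Set G) = Y' := by
    ext x
    simp only [hF'def, Finset.coe_filter, Set.mem_setOf_eq, Finset.mem_coe]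
    exact ⟨fun hx => hx.2, fun hx => ⟨hY' hx, hx⟩⟩
  have hF'F : F' ⊆ F := Finset.filter_subset _ _
  have hle : Nat.find hex ≤ F'.card :=
    Nat.find_le ⟨F', rfl, by rw [hF'coe]; exact hY'.trans hFS, by rw [hF'coe]; exact hgY'⟩
  have : F' = F := Finset.eq_of_subset_of_card_le hF'F (hcard ▸ hle)
  rw [← hF'coe, this]

/-- Lemma 3.9. Let `G` be in class `𝒞(X, W)` (with centraliser
decompositions `Z`, `O`), let `w ∈ W` with `C(w)` abelian, and let `g ∈ C(w)`. If
`C(g)` is non-abelian then `g ∈ O(w)`, there is `w₀ ∈ W ∩ O(w)` with `C(g) = C(w₀)`,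
and `C(g) = Z(g) × O(g)` is canonical with `Z(g) ≤ O(w)`. -/
theorem classC_intersect_centralizers (G : Type*) [Group G]
    (X W : Set G) (Z O : G → Subgroup G) (hG : ClassCWith G X W Z O)
    (w g : G) (hw : w ∈ W)
    (hab : IsAbelianSub (Subgroup.centralizer {w}))
    (hg : g ∈ Subgroup.centralizer ({w} : Set G))
    (hgna : ¬ IsAbelianSub (Subgroup.centralizer ({g} : Set G))) :
    g ∈ O w ∧
    ∃ w₀ : G, w₀ ∈ W ∧ w₀ ∈ O w ∧
      Subgroup.centralizer ({g} : Set G) = Subgroup.centralizer {w₀} ∧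
      ∃ Yg Kg : Set G, Kg ⊆ X ∧
        MinimalWith X (fun Y => g ∈ Subgroup.closure Y) Yg ∧
        Subgroup.closure Yg ≤ subCenter (Subgroup.centralizer {w₀}) ∧
        IsIDP (Subgroup.closure Yg) (Subgroup.closure Kg)
          (Subgroup.centralizer ({g} : Set G)) ∧
        Subgroup.closure Yg ≤ O w := by
  classical
  -- C(w) ≤ C(g)
  have hCwCg : Subgroup.centralizer ({w} : Set G) ≤ Subgroup.centralizer ({g} : Set G) := by
    intro x hx
    rw [Subgroup.mem_centralizer_singleton_iff]
    exact hab x hx g hg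
  -- w ∈ C(g)
  have hwCg : w ∈ Subgroup.centralizer ({g} : Set G) := by
    rw [Subgroup.mem_centralizer_singleton_iff]
    exact (Subgroup.mem_centralizer_singleton_iff.mp hg).symm
  -- find h ∈ C(g) \ C(w)
  obtain ⟨h, hhCg, hhCw⟩ : ∃ h, h ∈ Subgroup.centralizer ({g} : Set G) ∧
      h ∉ Subgroup.centralizer ({w} : Set G) := by
    by_contra hc
    push_neg at hc
    exact hgna fun a ha b hb => hab a (hc a ha) b (hc b hb)
  have hcomm_hg : h * g = g * h := Subgroup.mem_centralizer_singleton_iff.mp hhCg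
  have hconjg : h⁻¹ * g * h = g := by
    rw [mul_assoc, ← hcomm_hg, inv_mul_cancel_left]
  -- g ∈ O w by (C7)
  have hgO : g ∈ O w :=
    (hG.c7 w hw hab g h hg (by rw [hconjg]; exact hg) hhCw).1
  -- C(g) is not conjugate to C(w)
  have hnotconj : ¬ AreConjSub (Subgroup.centralizer ({w} : Set G))
      (Subgroup.centralizer ({g} : Set G)) := by
    rintro ⟨h', heq⟩
    exact hgna (heq ▸ isAbelianSub_conjSub hab)
  obtain ⟨w₀, h', hw₀W, hw₀O, hh'O, heq⟩ := hG.c6c w hw g hgO hnotconj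
  have hOle : O w ≤ Subgroup.centralizer ({w} : Set G) := by
    have h6b := hG.c6b w hw
    rw [← h6b.2.2]
    exact le_sup_right
  have hcomm' : h' * w₀ = w₀ * h' := hab h' (hOle hh'O) w₀ (hOle hw₀O)
  have hh'mem : h' ∈ Subgroup.centralizer ({w₀} : Set G) :=
    Subgroup.mem_centralizer_singleton_iff.mpr hcomm'
  -- C(g) = C(w₀)
  have hCg : Subgroup.centralizer ({g} : Set G) = Subgroup.centralizer ({w₀} : Set G) := by
    rw [heq, conjSub_self_mem hh'mem]
  have hw₀na : ¬ IsAbelianSub (Subgroup.centralizer ({w₀} : Set G)) := hCg ▸ hgna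
  obtain ⟨hcanon, ⟨Yw₀, hYw₀min, hZeq⟩, Yc, hYcX, hYc⟩ := hG.c8 w₀ hw₀W hw₀na
  obtain ⟨K, hKX, hOeq, hOprop, hOmax⟩ := hG.c6biii w₀ hw₀W hw₀na
  have hIDP₀ := hG.c6b w₀ hw₀W
  have hCsup : Subgroup.closure (Yw₀ ∪ K) = Subgroup.centralizer ({w₀} : Set G) := by
    rw [Subgroup.closure_union, ← hZeq, ← hOeq]
    exact hIDP₀.2.2
  have hYw₀X : Yw₀ ⊆ X := hYw₀min.1
  have hUX : Yw₀ ∪ K ⊆ X := Set.union_subset hYw₀X hKX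
  -- Yc ⊆ Yw₀ ∪ K
  have hYcU : Yc ⊆ Yw₀ ∪ K := by
    intro y hy
    refine hG.c4b y (hYcX hy) (Yw₀ ∪ K) hUX ?_
    have hy1 : y ∈ subCenter (Subgroup.centralizer ({w₀} : Set G)) :=
      hYc ▸ Subgroup.subset_closure hy
    have hy2 : y ∈ Subgroup.centralizer ({w₀} : Set G) := by
      simp only [subCenter, Subgroup.mem_inf] at hy1
      exact hy1.1
    rw [hCsup]
    exact hy2
  -- g is in the canonical centre
  have hgsub : g ∈ subCenter (Subgroup.centralizer ({w₀} : Set G)) := by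
    simp only [subCenter, Subgroup.mem_inf]
    constructor
    · rw [← hCg]
      exact Subgroup.mem_centralizer_singleton_iff.mpr rfl
    · rw [Subgroup.mem_centralizer_iff]
      intro x hx
      have : x ∈ Subgroup.centralizer ({g} : Set G) := by rw [hCg]; exact hx
      exact Subgroup.mem_centralizer_singleton_iff.mp this
  have hgYc : g ∈ Subgroup.closure Yc := by rw [← hYc]; exact hgsub
  obtain ⟨Yg, hYgYc, hYgmin⟩ := exists_minimalWith hYcX hgYc
  have hZle : Subgroup.closure Yg ≤ subCenter (Subgroup.centralizer ({w₀} : Set G)) := by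
    rw [hYc]
    exact Subgroup.closure_mono hYgYc
  -- decomposition of C(g)
  set Kg : Set G := (Yw₀ ∪ K) \ Yg with hKgdef
  have hKgX : Kg ⊆ X := Set.diff_subset.trans hUX
  have hYgU : Yg ⊆ Yw₀ ∪ K := hYgYc.trans hYcU
  have hdisj : Disjoint Yg Kg := Set.disjoint_sdiff_right
  have hUmem : ∀ u ∈ Yw₀ ∪ K, u ∈ Subgroup.centralizer ({w₀} : Set G) := by
    intro u hu
    rw [← hCsup]
    exact Subgroup.subset_closure hu
  have hcen : ∀ y ∈ Yg, y ∈ Subgroup.centralizer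
      ((Subgroup.centralizer ({w₀} : Set G) : Subgroup G) : Set G) := by
    intro y hy
    have := hZle (Subgroup.subset_closure hy)
    simp only [subCenter, Subgroup.mem_inf] at this
    exact this.2
  have hcommYK : ∀ y ∈ Yg, ∀ k ∈ Kg, Commute y k := by
    intro y hy k hk
    exact (Subgroup.mem_centralizer_iff.mp (hcen y hy) k (hUmem k hk.1)).symm
  have hIDP := hG.c4a Yg Kg (hYgYc.trans hYcX) hKgX hdisj hcommYK
  have hUeq : Yg ∪ Kg = Yw₀ ∪ K := Set.union_diff_cancel hYgU
  rw [hUeq, hCsup] at hIDP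
  -- closure Yg ≤ O w
  have hZOw : Subgroup.closure Yg ≤ O w := by
    rw [Subgroup.closure_le]
    intro y hy
    have hyw : y ∈ Subgroup.centralizer ({w} : Set G) := by
      rw [Subgroup.mem_centralizer_singleton_iff]
      have hwC : w ∈ Subgroup.centralizer ({w₀} : Set G) := by rw [← hCg]; exact hwCg
      exact (Subgroup.mem_centralizer_iff.mp (hcen y hy) w hwC).symm
    have hhC : h ∈ Subgroup.centralizer ({w₀} : Set G) := by rw [← hCg]; exact hhCg
    have hyh : h * y = y * h := Subgroup.mem_centralizer_iff.mp (hcen y hy) h hhC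
    have hconjy : h⁻¹ * y * h = y := by
      rw [mul_assoc, ← hyh, inv_mul_cancel_left]
    exact (hG.c7 w hw hab y h hyw (by rw [hconjy]; exact hyw) hhCw).1
  exact ⟨hgO, w₀, hw₀W, hw₀O, hCg, Yg, Kg, hKgX, hYgmin, hZle,
    by rw [hCg]; exact hIDP, hZOw⟩
end PaperBase
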